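/- The function h(z_1,z_2) = 2/(2 - z_1 - z_2) is holomorphic on D^2 but does not belong to H^2(D^2); that is, sup over 0 < r < 1 of the integral over T^2 of |2 - r*zeta_1 - r*zeta_2|^{-2} dm(zeta) is infinite (equivalently, the integral over T^2 of |2 - zeta_1 - zeta_2|^{-2} dm(zeta) diverges). -/

import Mathlib

open MeasureTheory Complex Set Filter Topology MvPolynomial
open scoped ENNReal

noncomputable section

/-- The torus `T^2` as a subset of `ℂ × ℂ`. -/
def torus2 : Set (ℂ × ℂ) := {z | ‖z.1‖ = 1 ∧ ‖z.2‖ = 1}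

/-- The open unit bidisc `D^2`. -/
def bidisc : Set (ℂ × ℂ) := {z | ‖z.1‖ < 1 ∧ ‖z.2‖ < 1}

/-- The product Cauchy kernel on the bidisc. -/
def cauchyKer2 (z w : ℂ × ℂ) : ℂ :=
  ((1 - z.1 * (starRingEnd ℂ) w.1) * (1 - z.2 * (starRingEnd ℂ) w.2))⁻¹

/-- The product Poisson kernel on the bidisc. -/
def poissonKer2 (z ζ : ℂ × ℂ) : ℝ :=
  ((1 - ‖z.1‖ ^ 2) / ‖ζ.1 - z.1‖ ^ 2) *
    ((1 - ‖z.2‖ ^ 2) / ‖ζ.2 - z.2‖ ^ 2)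

/-- `σ` is the Clark-Aleksandrov measure of `b : D^2 → D` at parameter `α`. -/
def IsClarkMeasure2 (b : ℂ × ℂ → ℂ) (α : ℂ) (σ : Measure (ℂ × ℂ)) : Prop :=
  IsFiniteMeasure σ ∧ σ torus2ᶜ = 0 ∧
    ∀ z ∈ bidisc, ∫ ζ, poissonKer2 z ζ ∂σ =
      (1 - ‖b z‖ ^ 2) / ‖α - b z‖ ^ 2

/-- Normalized Haar (Lebesgue) measure on the unit circle `T`, as a measure on `ℂ`. -/
def haarCircle : Measure ℂ :=
  (ENNReal.ofReal (2 * Real.pi))⁻¹ •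
    ((volume : Measure ℝ).restrict (Set.Ioc (0 : ℝ) (2 * Real.pi))).map
      (fun t : ℝ => Complex.exp (t * Complex.I))

/-- Normalized Haar (Lebesgue) measure on `T^2`, as a measure on `ℂ × ℂ`. -/
def haarTorus2 : Measure (ℂ × ℂ) :=
  (ENNReal.ofReal (2 * Real.pi))⁻¹ ^ 2 •
    ((volume : Measure (ℝ × ℝ)).restrict
        (Set.Ioc (0 : ℝ) (2 * Real.pi) ×ˢ Set.Ioc (0 : ℝ) (2 * Real.pi))).map
      (fun t : ℝ × ℝ => (Complex.exp (t.1 * Complex.I), Complex.exp (t.2 * Complex.I)))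


lemma aux1 : ∫⁻ s in Set.Ioo (0:ℝ) (1/2), ENNReal.ofReal ((16 * s)⁻¹) ∂volume = ⊤ := by
  by_contra h
  have hm : AEStronglyMeasurable (fun s : ℝ => (16 * s)⁻¹)
      (volume.restrict (Set.Ioo (0:ℝ) (1/2))) :=
    ((measurable_const_mul 16).inv).aestronglyMeasurable
  have hpos : 0 ≤ᵐ[volume.restrict (Set.Ioo (0:ℝ) (1/2))] fun s : ℝ => (16 * s)⁻¹ := by
    filter_upwards [ae_restrict_mem measurableSet_Ioo] with s hs
    have h1 : (0:ℝ) < s := hs.1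
    positivity
  have hint : Integrable (fun s : ℝ => (16 * s)⁻¹)
      (volume.restrict (Set.Ioo (0:ℝ) (1/2))) :=
    (lintegral_ofReal_ne_top_iff_integrable hm hpos).1 h
  have h2 : IntegrableOn (fun x : ℝ => x ^ (-1:ℝ)) (Set.Ioo (0:ℝ) (1/2)) := by
    have h3 := hint.const_mul 16
    refine (IntegrableOn.congr_fun h3 ?_ measurableSet_Ioo)
    intro x hx
    have hx0 : x ≠ 0 := ne_of_gt hx.1
    simp only [Real.rpow_neg_one]
    field_simp
  rw [intervalIntegral.integrableOn_Ioo_rpow_iff (by norm_num)] at h2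
  exact lt_irrefl _ h2

-- pointwise kernel bound
lemma aux_ker {s t : ℝ} (hs : s ∈ Set.Ioo (0:ℝ) (1/2)) (ht : t ∈ Set.Ioo (0:ℝ) (1/2)) :
    ENNReal.ofReal ((4 * (s + t) ^ 2)⁻¹) ≤
      ENNReal.ofReal (1 / ‖2 - Complex.exp (s * Complex.I)
        - Complex.exp (t * Complex.I)‖ ^ 2) := by
  set A := ‖2 - Complex.exp (s * Complex.I) - Complex.exp (t * Complex.I)‖ with hA
  have habs : ∀ x : ℝ, x ∈ Set.Ioo (0:ℝ) (1/2) →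
      ‖1 - Complex.exp (x * Complex.I)‖ ≤ 2 * x := by
    intro x hx
    have h1 : ‖(x : ℂ) * Complex.I‖ = x := by
      simp [abs_of_pos hx.1]
    have h2 := Complex.norm_exp_sub_one_le (x := (x : ℂ) * Complex.I)
      (by rw [h1]; linarith [hx.2])
    rw [h1] at h2
    calc ‖1 - Complex.exp (x * Complex.I)‖
        = ‖Complex.exp (x * Complex.I) - 1‖ := by rw [norm_sub_rev]
      _ ≤ 2 * x := h2
  have hAle : A ≤ 2 * (s + t) := by
    have : (2 : ℂ) - Complex.exp (s * Complex.I) - Complex.exp (t * Complex.I)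
        = (1 - Complex.exp (s * Complex.I)) + (1 - Complex.exp (t * Complex.I)) := by ring
    rw [hA, this]
    calc ‖_‖ ≤ _ := norm_add_le _ _
      _ ≤ 2 * s + 2 * t := add_le_add (habs s hs) (habs t ht)
      _ = 2 * (s + t) := by ring
  have hApos : 0 < A := by
    rw [hA]
    rw [norm_pos_iff]
    intro h
    have hre := congrArg Complex.re h
    simp only [Complex.sub_re, Complex.exp_ofReal_mul_I_re, Complex.zero_re] at hre
    have hcs : Real.cos s < 1 := by
      have := Real.cos_lt_cos_of_nonneg_of_le_pi (le_refl 0) (by linarith [Real.pi_gt_three, hs.2.le]) hs.1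
      simpa using this
    have hct : Real.cos t < 1 := by
      have := Real.cos_lt_cos_of_nonneg_of_le_pi (le_refl 0) (by linarith [Real.pi_gt_three, ht.2.le]) ht.1
      simpa using this
    norm_num at hre
    linarith
  apply ENNReal.ofReal_le_ofReal
  rw [one_div]
  apply inv_anti₀ (by positivity)
  calc A ^ 2 ≤ (2 * (s + t)) ^ 2 := by
        apply pow_le_pow_left₀ hApos.le hAle
    _ = 4 * (s + t) ^ 2 := by ring

lemma aux2 : ∫⁻ ζ, ENNReal.ofReal (1 / ‖2 - ζ.1 - ζ.2‖ ^ 2) ∂haarTorus2 = ⊤ := by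
  have hgm : Measurable (fun ζ : ℂ × ℂ => ENNReal.ofReal (1 / ‖2 - ζ.1 - ζ.2‖ ^ 2)) := by
    apply ENNReal.measurable_ofReal.comp
    simp only [one_div]
    exact (((continuous_norm.comp
      ((continuous_const.sub continuous_fst).sub continuous_snd)).pow 2).measurable).inv
  have hφ : Measurable (fun t : ℝ × ℝ =>
      (Complex.exp (t.1 * Complex.I), Complex.exp (t.2 * Complex.I))) := by
    apply Measurable.prodMk <;> fun_prop
  rw [haarTorus2, lintegral_smul_measure, lintegral_map hgm hφ]
  rw [smul_eq_mul, ENNReal.mul_eq_top]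
  left
  constructor
  · apply pow_ne_zero
    simp [ENNReal.inv_ne_zero, ENNReal.ofReal_ne_top, ENNReal.mul_eq_top]
  · -- main divergence
    rw [eq_top_iff]
    have hsub : Set.Ioo (0:ℝ) (1/2) ×ˢ Set.Ioo (0:ℝ) (1/2) ⊆
        Set.Ioc (0 : ℝ) (2 * Real.pi) ×ˢ Set.Ioc (0 : ℝ) (2 * Real.pi) := by
      have hpi := Real.pi_gt_three
      rintro ⟨a, b⟩ ⟨ha, hb⟩
      exact ⟨⟨ha.1, by linarith [ha.2]⟩, ⟨hb.1, by linarith [hb.2]⟩⟩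
    calc (⊤ : ℝ≥0∞) = ∫⁻ s in Set.Ioo (0:ℝ) (1/2), ENNReal.ofReal ((16 * s)⁻¹) ∂volume :=
          aux1.symm
      _ ≤ ∫⁻ s in Set.Ioo (0:ℝ) (1/2),
            (∫⁻ t in Set.Ioo (0:ℝ) (1/2), ENNReal.ofReal ((4 * (s + t) ^ 2)⁻¹) ∂volume) ∂volume := by
          apply setLIntegral_mono' measurableSet_Ioo
          intro s hs
          calc ENNReal.ofReal ((16 * s)⁻¹)
              = ENNReal.ofReal ((16 * s ^ 2)⁻¹) * ENNReal.ofReal s := by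
                rw [← ENNReal.ofReal_mul (by positivity)]
                congr 1
                have : s ≠ 0 := ne_of_gt hs.1
                field_simp
            _ = ENNReal.ofReal ((16 * s ^ 2)⁻¹) * volume (Set.Ioo (0:ℝ) s) := by
                rw [Real.volume_Ioo, sub_zero]
            _ = ∫⁻ _ in Set.Ioo (0:ℝ) s, ENNReal.ofReal ((16 * s ^ 2)⁻¹) ∂volume := by
                rw [setLIntegral_const]
            _ ≤ ∫⁻ t in Set.Ioo (0:ℝ) s, ENNReal.ofReal ((4 * (s + t) ^ 2)⁻¹) ∂volume := by
                apply setLIntegral_mono' measurableSet_Ioo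
                intro t ht
                apply ENNReal.ofReal_le_ofReal
                have h1 : (0:ℝ) < s := hs.1
                have h2 : (0:ℝ) < t := ht.1
                apply inv_anti₀ (by positivity)
                nlinarith [ht.2]
            _ ≤ ∫⁻ t in Set.Ioo (0:ℝ) (1/2), ENNReal.ofReal ((4 * (s + t) ^ 2)⁻¹) ∂volume := by
                apply lintegral_mono_set
                exact Set.Ioo_subset_Ioo le_rfl hs.2.le
      _ = ∫⁻ p in Set.Ioo (0:ℝ) (1/2) ×ˢ Set.Ioo (0:ℝ) (1/2),
            ENNReal.ofReal ((4 * (p.1 + p.2) ^ 2)⁻¹) ∂volume := by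
          rw [MeasureTheory.Measure.volume_eq_prod, ← Measure.prod_restrict]
          rw [lintegral_prod]
          apply Measurable.aemeasurable
          apply ENNReal.measurable_ofReal.comp
          exact (((continuous_const.mul ((continuous_fst.add continuous_snd).pow 2))).measurable).inv
      _ ≤ ∫⁻ p in Set.Ioo (0:ℝ) (1/2) ×ˢ Set.Ioo (0:ℝ) (1/2),
            ENNReal.ofReal (1 / ‖2 - Complex.exp (p.1 * Complex.I)
              - Complex.exp (p.2 * Complex.I)‖ ^ 2) ∂volume := by
          apply setLIntegral_mono' (measurableSet_Ioo.prod measurableSet_Ioo)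
          rintro ⟨a, b⟩ ⟨ha, hb⟩
          exact aux_ker ha hb
      _ ≤ _ := lintegral_mono_set hsub

theorem two_over_two_minus_z1_minus_z2_not_in_H2 :
    DifferentiableOn ℂ (fun z : ℂ × ℂ => 2 / (2 - z.1 - z.2)) bidisc ∧
    (⨆ r : Set.Ioo (0 : ℝ) 1,
      ∫⁻ ζ, ENNReal.ofReal
        (‖(2 : ℂ) / (2 - (r : ℝ) • ζ.1 - (r : ℝ) • ζ.2)‖ ^ 2)
        ∂haarTorus2) = ⊤ ∧
    ∫⁻ ζ, ENNReal.ofReal (1 / ‖2 - ζ.1 - ζ.2‖ ^ 2) ∂haarTorus2 = ⊤ := by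
  refine ⟨?_, ?_, aux2⟩
  · -- differentiability
    have hden : DifferentiableOn ℂ (fun z : ℂ × ℂ => 2 - z.1 - z.2) bidisc :=
      (((differentiable_const (2:ℂ)).sub differentiable_fst).sub
        differentiable_snd).differentiableOn
    have hne : ∀ z ∈ bidisc, (2:ℂ) - z.1 - z.2 ≠ 0 := by
      intro z hz h0

      have h1 : ‖z.1 + z.2‖ < 2 :=
        lt_of_le_of_lt (norm_add_le _ _) (by linarith [hz.1, hz.2])
      have h2 : z.1 + z.2 = 2 := by linear_combination -h0
      rw [h2] at h1
      simp [Complex.norm_two] at h1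
    simp only [div_eq_mul_inv]
    exact (differentiableOn_const (2:ℂ)).mul (hden.inv hne)
  · -- sup over r is infinite
    set u : ℕ → ℝ := fun n => 1 - ((n : ℝ) + 2)⁻¹ with hu_def
    have hu : ∀ n, u n ∈ Set.Ioo (0:ℝ) 1 := by
      intro n
      have h1 : ((n : ℝ) + 2)⁻¹ ≤ 2⁻¹ := by
        apply inv_anti₀ (by norm_num)
        have : (0:ℝ) ≤ (n:ℝ) := Nat.cast_nonneg n
        linarith
      have h2 : (0:ℝ) < ((n : ℝ) + 2)⁻¹ := by positivity
      constructor
      · simp only [hu_def]; norm_num at h1 ⊢; linarith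
      · simp only [hu_def]; linarith
    have hut : Tendsto u atTop (nhds 1) := by
      have h1 : Tendsto (fun n : ℕ => ((n : ℝ) + 2)⁻¹) atTop (nhds 0) := by
        apply tendsto_inv_atTop_zero.comp
        apply tendsto_atTop_add_const_right
        exact tendsto_natCast_atTop_atTop
      simpa using tendsto_const_nhds.sub h1
    have hFmeas : ∀ n, Measurable (fun ζ : ℂ × ℂ =>
        ENNReal.ofReal (‖(2:ℂ) / (2 - u n • ζ.1 - u n • ζ.2)‖ ^ 2)) := by
      intro n
      apply ENNReal.measurable_ofReal.comp
      apply Measurable.pow_const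
      exact continuous_norm.measurable.comp
        (measurable_const.div ((measurable_const.sub
          (measurable_fst.const_smul (u n))).sub (measurable_snd.const_smul (u n))))
    have hpt : ∀ ζ : ℂ × ℂ, ENNReal.ofReal (1 / ‖2 - ζ.1 - ζ.2‖ ^ 2) ≤
        Filter.liminf (fun n => ENNReal.ofReal
          (‖(2:ℂ) / (2 - u n • ζ.1 - u n • ζ.2)‖ ^ 2)) atTop := by
      intro ζ
      by_cases hd : (2:ℂ) - ζ.1 - ζ.2 = 0
      · rw [hd]; simp
      · have hden : Tendsto (fun n => (2:ℂ) - u n • ζ.1 - u n • ζ.2) atTop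
            (nhds ((2:ℂ) - ζ.1 - ζ.2)) := by
          have h1 : Tendsto (fun n => u n • ζ.1) atTop (nhds ((1:ℝ) • ζ.1)) :=
            hut.smul tendsto_const_nhds
          have h2 : Tendsto (fun n => u n • ζ.2) atTop (nhds ((1:ℝ) • ζ.2)) :=
            hut.smul tendsto_const_nhds
          simpa [one_smul] using (tendsto_const_nhds.sub h1).sub h2
        have hlim : Tendsto (fun n => ENNReal.ofReal
            (‖(2:ℂ) / (2 - u n • ζ.1 - u n • ζ.2)‖ ^ 2)) atTop
            (nhds (ENNReal.ofReal (‖(2:ℂ) / (2 - ζ.1 - ζ.2)‖ ^ 2))) := by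
          apply (ENNReal.continuous_ofReal.tendsto _).comp
          exact (((continuous_norm.tendsto _).comp
            (tendsto_const_nhds.div hden hd)).pow 2)
        rw [hlim.liminf_eq]
        apply ENNReal.ofReal_le_ofReal
        have hA : 0 < ‖2 - ζ.1 - ζ.2‖ := norm_pos_iff.mpr hd
        rw [norm_div, Complex.norm_two, div_pow, one_div, div_eq_mul_inv]
        have h4 : (0:ℝ) ≤ (‖2 - ζ.1 - ζ.2‖ ^ 2)⁻¹ := by positivity
        calc (‖2 - ζ.1 - ζ.2‖ ^ 2)⁻¹
            = 1 * (‖2 - ζ.1 - ζ.2‖ ^ 2)⁻¹ := (one_mul _).symm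
          _ ≤ 2 ^ 2 * (‖2 - ζ.1 - ζ.2‖ ^ 2)⁻¹ := by
              apply mul_le_mul_of_nonneg_right (by norm_num) h4
    have hliminf : (⊤ : ℝ≥0∞) ≤ Filter.liminf (fun n => ∫⁻ ζ, ENNReal.ofReal
        (‖(2:ℂ) / (2 - u n • ζ.1 - u n • ζ.2)‖ ^ 2) ∂haarTorus2) atTop := by
      calc (⊤ : ℝ≥0∞) = ∫⁻ ζ, ENNReal.ofReal (1 / ‖2 - ζ.1 - ζ.2‖ ^ 2)
            ∂haarTorus2 := aux2.symm
        _ ≤ ∫⁻ ζ, Filter.liminf (fun n => ENNReal.ofReal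
              (‖(2:ℂ) / (2 - u n • ζ.1 - u n • ζ.2)‖ ^ 2)) atTop ∂haarTorus2 :=
            lintegral_mono hpt
        _ ≤ _ := lintegral_liminf_le hFmeas
    rw [eq_top_iff]
    refine le_trans hliminf ?_
    have hle : ∀ n, (∫⁻ ζ, ENNReal.ofReal
        (‖(2:ℂ) / (2 - u n • ζ.1 - u n • ζ.2)‖ ^ 2) ∂haarTorus2) ≤
        ⨆ r : Set.Ioo (0 : ℝ) 1,
          ∫⁻ ζ, ENNReal.ofReal
            (‖(2 : ℂ) / (2 - (r : ℝ) • ζ.1 - (r : ℝ) • ζ.2)‖ ^ 2) ∂haarTorus2 := by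
      intro n
      exact le_iSup (fun r : Set.Ioo (0 : ℝ) 1 => ∫⁻ ζ, ENNReal.ofReal
        (‖(2 : ℂ) / (2 - (r : ℝ) • ζ.1 - (r : ℝ) • ζ.2)‖ ^ 2) ∂haarTorus2)
        ⟨u n, hu n⟩
    calc Filter.liminf _ atTop ≤ Filter.liminf (fun _ : ℕ => ⨆ r : Set.Ioo (0 : ℝ) 1,
          ∫⁻ ζ, ENNReal.ofReal
            (‖(2 : ℂ) / (2 - (r : ℝ) • ζ.1 - (r : ℝ) • ζ.2)‖ ^ 2) ∂haarTorus2)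
          atTop := Filter.liminf_le_liminf (Filter.Eventually.of_forall hle)
      _ = _ := Filter.liminf_const _
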